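/- Suppose (ω, F) is a Ramsey algebra and 𝒜 is a countable field of sets over ω. Then for every infinite sequence a in ω there exists b ≤_F a such that the collection {X ∈ 𝒜 : FR_F(b−n) ⊆ X for some n ∈ ω} is an ultrafilter on 𝒜. -/

import Mathlib

/-- A field of sets over `S`: a nonempty collection of subsets of `S` closed under
finite unions, finite intersections and complementation. -/
def IsFieldOfSets {S : Type*} (A : Set (Set S)) : Prop :=
  A.Nonempty ∧ (∀ X ∈ A, ∀ Y ∈ A, X ∪ Y ∈ A) ∧ (∀ X ∈ A, ∀ Y ∈ A, X ∩ Y ∈ A) ∧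
    ∀ X ∈ A, Xᶜ ∈ A

/-- `U` is an ultrafilter on the field of sets `A`. -/
def IsUltraOn {S : Type*} (A U : Set (Set S)) : Prop :=
  U ⊆ A ∧ (∀ X ∈ U, ∀ Y ∈ U, X ∩ Y ∈ U) ∧ Set.univ ∈ U ∧ ∅ ∉ U ∧
    ∀ X ∈ A, X ∈ U ∨ Xᶜ ∈ U


/-- An operation on `ω` of arity `op.1`, represented as a function on lists
(its values on lists of length `op.1` are the relevant ones). -/
abbrev NatOp : Type := ℕ × (List ℕ → ℕ)

/-- `toFun op` is `op` viewed as a genuine `op.1`-ary operation on `ω`. -/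
def NatOp.toFun (op : NatOp) : (Fin op.1 → ℕ) → ℕ := fun x => op.2 (List.ofFn x)

/-- `applyOps [h₁,…,hₘ] l` splits `l` into consecutive blocks of lengths given by the
arities of the `hᵢ` and returns the list `[h₁(block₁), …, hₘ(blockₘ)]`. -/
def applyOps : List NatOp → List ℕ → List ℕ
  | [], _ => []
  | h :: hs, l => h.2 (l.take h.1) :: applyOps hs (l.drop h.1)

/-- The orderly terms over `F`: the smallest collection of operations on `ω` including
`F`, containing the (unary) identity, and closed under orderly composition
`f(x̄₁,…,x̄ₙ) = g(h₁(x̄₁),…,hₙ(x̄ₙ))`. -/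
inductive OrderlyTerm (F : Set NatOp) : NatOp → Prop where
  | base {op : NatOp} (h : op ∈ F) : OrderlyTerm F op
  | id : OrderlyTerm F (1, fun l => l.headI)
  | comp {g : NatOp} (hs : List NatOp) (hg : OrderlyTerm F g)
      (hhs : ∀ h ∈ hs, OrderlyTerm F h) (hlen : g.1 = hs.length) :
      OrderlyTerm F ((hs.map Prod.fst).sum, fun l => g.2 (applyOps hs l))

/-- `FRset F a`: the set of finite reductions of the infinite sequence `a` with respect
to `F`, i.e. all values `f(a i₁, …, a iₘ)` of orderly terms `f` over `F` on finite
subsequences `a i₁, …, a iₘ` (with `i₁ < ⋯ < iₘ`) of `a`. -/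
def FRset (F : Set NatOp) (a : ℕ → ℕ) : Set ℕ :=
  {z | ∃ op : NatOp, OrderlyTerm F op ∧
    ∃ l : List ℕ, l.Chain' (· < ·) ∧ l.length = op.1 ∧ op.2 (l.map a) = z}

/-- `b` is a reduction of `a` with respect to `F` (`b ≤_F a`): each `b n` is obtained by
applying an orderly term over `F` to a finite block of terms of `a`, the blocks being
disjoint, consecutive, and in increasing order of index. -/
def IsReduction (F : Set NatOp) (b a : ℕ → ℕ) : Prop :=
  ∃ ops : ℕ → NatOp, ∃ idx : ℕ → List ℕ,
    (∀ n, OrderlyTerm F (ops n)) ∧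
    (∀ n, (idx n).length = (ops n).1) ∧
    (∀ n, (idx n).Chain' (· < ·)) ∧
    (∀ n m : ℕ, n < m → ∀ x ∈ idx n, ∀ y ∈ idx m, x < y) ∧
    ∀ n, b n = (ops n).2 ((idx n).map a)

/-- `(ω, F)` is a Ramsey algebra: for every infinite sequence `a` and every `X ⊆ ω`
there is a reduction `b ≤_F a` with `FR_F(b) ⊆ X` or `FR_F(b) ∩ X = ∅`. -/
def IsRamseyAlg (F : Set NatOp) : Prop :=
  ∀ (a : ℕ → ℕ) (X : Set ℕ), ∃ b : ℕ → ℕ, IsReduction F b a ∧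
    (FRset F b ⊆ X ∨ Disjoint (FRset F b) X)

section Aux

variable {F : Set NatOp}

structure Red (F : Set NatOp) where
  ops : ℕ → NatOp
  idx : ℕ → List ℕ
  horder : ∀ n, OrderlyTerm F (ops n)
  hlen : ∀ n, (idx n).length = (ops n).1
  hchain : ∀ n, (idx n).Chain' (· < ·)
  hcross : ∀ n m : ℕ, n < m → ∀ x ∈ idx n, ∀ y ∈ idx m, x < y

def Red.apply (r : Red F) (a : ℕ → ℕ) : ℕ → ℕ := fun n => (r.ops n).2 ((r.idx n).map a)

lemma red_isReduction (r : Red F) (a : ℕ → ℕ) : IsReduction F (r.apply a) a :=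
  ⟨r.ops, r.idx, r.horder, r.hlen, r.hchain, r.hcross, fun _ => rfl⟩

def compTerm (g : NatOp) (hs : List NatOp) : NatOp :=
  ((hs.map Prod.fst).sum, fun l => g.2 (applyOps hs l))

lemma compTerm_orderly {g : NatOp} (hg : OrderlyTerm F g) (hs : List NatOp)
    (hhs : ∀ h ∈ hs, OrderlyTerm F h) (hlen : g.1 = hs.length) :
    OrderlyTerm F (compTerm g hs) :=
  OrderlyTerm.comp hs hg hhs hlen

lemma applyOps_join (r : Red F) (a : ℕ → ℕ) :
    ∀ l : List ℕ, applyOps (l.map r.ops) (((l.map r.idx).flatten).map a) = l.map (r.apply a)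
  | [] => rfl
  | n :: t => by
    have hlen : ((r.idx n).map a).length = (r.ops n).1 := by
      simp [r.hlen n]
    simp only [List.map_cons, List.flatten_cons, List.map_append, applyOps]
    rw [List.take_left' hlen, List.drop_left' hlen, applyOps_join r a t]
    rfl

lemma join_chain (r : Red F) {l : List ℕ} (h : l.Chain' (· < ·)) :
    ((l.map r.idx).flatten).Chain' (· < ·) := by
  simp only [List.Chain'] at h ⊢
  rw [List.isChain_iff_pairwise] at h ⊢
  rw [List.pairwise_flatten]
  constructor
  · intro l' hl'
    obtain ⟨i, _, rfl⟩ := List.mem_map.1 hl'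
    exact List.isChain_iff_pairwise.1 (r.hchain i)
  · rw [List.pairwise_map]
    exact h.imp_of_mem (fun {i j} _ _ hij x hx y hy => r.hcross i j hij x hx y hy)

lemma join_length (r : Red F) (l : List ℕ) :
    ((l.map r.idx).flatten).length = ((l.map r.ops).map Prod.fst).sum := by
  rw [List.length_flatten, List.map_map, List.map_map]
  congr 1
  exact List.map_congr_left fun i _ => r.hlen i

def Red.comp (r s : Red F) : Red F where
  ops n := compTerm (s.ops n) ((s.idx n).map r.ops)
  idx n := ((s.idx n).map r.idx).flatten
  horder n := by
    refine compTerm_orderly (s.horder n) _ (fun h hh => ?_) (by simp [← s.hlen n])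
    obtain ⟨i, _, rfl⟩ := List.mem_map.1 hh
    exact r.horder i
  hlen n := join_length r (s.idx n)
  hchain n := join_chain r (s.hchain n)
  hcross n m hnm x hx y hy := by
    obtain ⟨L, hL, hxL⟩ := List.mem_flatten.1 hx
    obtain ⟨i, hi, rfl⟩ := List.mem_map.1 hL
    obtain ⟨L', hL', hyL⟩ := List.mem_flatten.1 hy
    obtain ⟨j, hj, rfl⟩ := List.mem_map.1 hL'
    exact r.hcross i j (s.hcross n m hnm i hi j hj) x hxL y hyL

lemma Red.comp_apply (r s : Red F) (a : ℕ → ℕ) :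
    (r.comp s).apply a = s.apply (r.apply a) := by
  funext n
  show (compTerm (s.ops n) ((s.idx n).map r.ops)).2 (((s.idx n).map r.idx).flatten.map a) = _
  show (s.ops n).2 (applyOps ((s.idx n).map r.ops) (((s.idx n).map r.idx).flatten.map a)) = _
  rw [applyOps_join r a (s.idx n)]
  rfl

def idOp : NatOp := (1, fun l => l.headI)

def idRed : Red F where
  ops _ := idOp
  idx n := [n]
  horder _ := OrderlyTerm.id
  hlen _ := rfl
  hchain _ := List.isChain_singleton _
  hcross n m h x hx y hy := by
    simp only [List.mem_singleton] at hx hy; omega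

lemma idRed_apply (a : ℕ → ℕ) : (idRed (F := F)).apply a = a := rfl

def stepRed (k : ℕ) (r : Red F) : Red F where
  ops n := if n < k then idOp else r.ops (n - k)
  idx n := if n < k then [n] else (r.idx (n - k)).map (· + k)
  horder n := by
    by_cases h : n < k
    · simp only [h, if_pos]; exact OrderlyTerm.id
    · simp only [h, if_neg, if_false]; exact r.horder _
  hlen n := by
    by_cases h : n < k <;> simp [h, r.hlen, idOp]
  hchain n := by
    by_cases h : n < k
    · simp [h, List.Chain']
    · simp only [h, if_false]
      exact List.isChain_map_of_isChain _ (fun a b h => by omega) (r.hchain _)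
  hcross n m hnm x hx y hy := by
    by_cases hn : n < k <;> by_cases hm : m < k <;>
      simp only [hn, hm, if_true, if_false, List.mem_singleton, List.mem_map] at hx hy
    · omega
    · obtain ⟨y', _, rfl⟩ := hy; omega
    · omega
    · obtain ⟨x', hx', rfl⟩ := hx
      obtain ⟨y', hy', rfl⟩ := hy
      have := r.hcross (n - k) (m - k) (by omega) x' hx' y' hy'
      omega

lemma stepRed_apply_lt {k : ℕ} (r : Red F) (b : ℕ → ℕ) {n : ℕ} (h : n < k) :
    (stepRed k r).apply b n = b n := by
  simp [Red.apply, stepRed, h, idOp]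

lemma stepRed_apply_ge {k : ℕ} (r : Red F) (b : ℕ → ℕ) {n : ℕ} (h : k ≤ n) :
    (stepRed k r).apply b n = r.apply (fun i => b (i + k)) (n - k) := by
  simp only [Red.apply, stepRed, Nat.not_lt.2 h, if_false, List.map_map]
  rfl

lemma key (r : Red F) (s : ℕ → ℕ) (t : NatOp) (ht : OrderlyTerm F t)
    (l₀ : List ℕ) (hc : l₀.Chain' (· < ·)) (hl : l₀.length = t.1) :
    ∃ t' : NatOp, OrderlyTerm F t' ∧ ∃ l' : List ℕ, l'.Chain' (· < ·) ∧
      l'.length = t'.1 ∧ t'.2 (l'.map s) = t.2 (l₀.map (r.apply s)) ∧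
      ∀ x ∈ l', ∃ i ∈ l₀, x ∈ r.idx i := by
  refine ⟨compTerm t (l₀.map r.ops),
    compTerm_orderly ht _ (fun h hh => ?_) (by simp [← hl]),
    (l₀.map r.idx).flatten, join_chain r hc, join_length r l₀, ?_, ?_⟩
  · obtain ⟨i, _, rfl⟩ := List.mem_map.1 hh
    exact r.horder i
  · show t.2 (applyOps (l₀.map r.ops) _) = _
    rw [applyOps_join r s l₀]
  · intro x hx
    obtain ⟨L, hL, hxL⟩ := List.mem_flatten.1 hx
    obtain ⟨i, hi, rfl⟩ := List.mem_map.1 hL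
    exact ⟨i, hi, hxL⟩

lemma fr_sub (r : Red F) (s : ℕ → ℕ) : FRset F (r.apply s) ⊆ FRset F s := by
  rintro z ⟨t, ht, l, hc, hl, hv⟩
  obtain ⟨t', ht', l', hc', hl', hv', _⟩ := key r s t ht l hc hl
  exact ⟨t', ht', l', hc', hl', by rw [hv', hv]⟩

lemma fr_mem_zero (b : ℕ → ℕ) : b 0 ∈ FRset F b :=
  ⟨(1, fun l => l.headI), OrderlyTerm.id, [0], List.isChain_singleton _, rfl, rfl⟩

lemma frtail_mono (b : ℕ → ℕ) {n m : ℕ} (h : n ≤ m) :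
    FRset F (fun i => b (i + m)) ⊆ FRset F (fun i => b (i + n)) := by
  rintro z ⟨t, ht, l, hc, hl, hv⟩
  refine ⟨t, ht, l.map (· + (m - n)),
    List.isChain_map_of_isChain _ (fun a b h => by omega) hc, by simp [hl], ?_⟩
  rw [List.map_map]
  have : (fun i => b (i + n)) ∘ (· + (m - n)) = fun i => b (i + m) := by
    funext i; simp only [Function.comp]; congr 1; omega
  rw [this, hv]

lemma le_foldr_max : ∀ l : List ℕ, ∀ x ∈ l, x ≤ l.foldr max 0 := by
  intro l
  induction l with
  | nil => simp
  | cons h t ih =>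
    intro x hx
    rcases List.mem_cons.1 hx with rfl | hx
    · simp only [List.foldr_cons]; omega
    · have := ih x hx
      simp only [List.foldr_cons]; omega

lemma chain'_sub {k : ℕ} : ∀ l : List ℕ, l.Chain' (· < ·) → (∀ x ∈ l, k ≤ x) →
    (l.map (fun x => x - k)).Chain' (· < ·)
  | [], _, _ => by simp [List.Chain']
  | [x], _, _ => by simp [List.Chain']
  | x :: y :: t, hc, hk => by
    simp only [List.Chain', List.isChain_cons_cons] at hc
    rw [List.map_cons, List.map_cons]
    simp only [List.Chain', List.isChain_cons_cons]
    refine ⟨?_, ?_⟩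
    · have hxk := hk x (by simp)
      have hyk := hk y (by simp)
      omega
    · have := chain'_sub (y :: t) hc.2 (fun z hz => hk z (List.mem_cons_of_mem x hz))
      simpa [List.Chain'] using this

section Construction

variable (hF : IsRamseyAlg F) (Xs : ℕ → Set ℕ) (a : ℕ → ℕ)

-- (variables are captured explicitly below)

lemma exists_hom (hF : IsRamseyAlg F) (s : ℕ → ℕ) (X : Set ℕ) :
    ∃ r : Red F, FRset F (r.apply s) ⊆ X ∨ Disjoint (FRset F (r.apply s)) X := by
  obtain ⟨b, ⟨ops, idx, h1, h2, h3, h4, h5⟩, hhom⟩ := hF s X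
  have hb : b = Red.apply ⟨ops, idx, h1, h2, h3, h4⟩ s := funext h5
  exact ⟨⟨ops, idx, h1, h2, h3, h4⟩, hb ▸ hhom⟩

noncomputable def pick (s : ℕ → ℕ) (X : Set ℕ) : Red F :=
  (exists_hom hF s X).choose

lemma pick_spec (s : ℕ → ℕ) (X : Set ℕ) :
    FRset F ((pick hF s X).apply s) ⊆ X ∨ Disjoint (FRset F ((pick hF s X).apply s)) X :=
  (exists_hom hF s X).choose_spec

noncomputable def seqA : ℕ → ℕ → ℕ
  | 0 => a
  | k + 1 =>
    (stepRed k (pick hF (fun i => seqA k (i + k)) (Xs k))).apply (seqA k)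

noncomputable def rc (k : ℕ) : Red F :=
  pick hF (fun i => seqA hF Xs a k (i + k)) (Xs k)

noncomputable def ck (k : ℕ) : ℕ → ℕ :=
  (rc hF Xs a k).apply (fun i => seqA hF Xs a k (i + k))

lemma seqA_succ (k : ℕ) :
    seqA hF Xs a (k + 1) = (stepRed k (rc hF Xs a k)).apply (seqA hF Xs a k) := rfl

lemma seqA_stab {n k m : ℕ} (hn : n < k) (hk : k ≤ m) :
    seqA hF Xs a m n = seqA hF Xs a k n := by
  induction m with
  | zero => omega
  | succ m ih =>
    rcases Nat.lt_or_ge m k with h | h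
    · have : k = m + 1 := by omega
      rw [this]
    · rw [seqA_succ, stepRed_apply_lt _ _ (by omega), ih h]

lemma seqA_ge (k : ℕ) {x : ℕ} (hx : k ≤ x) :
    seqA hF Xs a (k + 1) x = ck hF Xs a k (x - k) := by
  rw [seqA_succ, stepRed_apply_ge _ _ hx]; rfl

noncomputable def seqE (k : ℕ) : ℕ → Red F
  | 0 => idRed
  | m + 1 =>
    if m + 1 ≤ k then idRed
    else (seqE k m).comp (stepRed m (rc hF Xs a m))

lemma seqE_le {k m : ℕ} (h : m ≤ k) : seqE hF Xs a k m = idRed := by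
  cases m with
  | zero => rfl
  | succ m => rw [seqE, if_pos h]

lemma seqE_apply {k : ℕ} : ∀ {m : ℕ}, k ≤ m →
    (seqE hF Xs a k m).apply (seqA hF Xs a k) = seqA hF Xs a m := by
  intro m
  induction m with
  | zero =>
    intro h
    have hk0 : k = 0 := by omega
    subst hk0; rfl
  | succ m ih =>
    intro h
    rcases Nat.lt_or_ge m k with hlt | hge
    · have : k = m + 1 := by omega
      subst this
      rw [seqE_le hF Xs a (le_refl _), idRed_apply]
    · rw [seqE, if_neg (by omega), Red.comp_apply, ih hge, seqA_succ]

lemma seqE_min {k : ℕ} : ∀ {m : ℕ}, ∀ n, ∀ x ∈ (seqE hF Xs a k m).idx n, min n k ≤ x := by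
  intro m
  induction m with
  | zero =>
    intro n x hx
    simp only [seqE, idRed, List.mem_singleton] at hx
    omega
  | succ m ih =>
    intro n x hx
    by_cases hmk : m + 1 ≤ k
    · rw [seqE, if_pos hmk] at hx
      simp only [idRed, List.mem_singleton] at hx
      omega
    · rw [seqE, if_neg hmk] at hx
      obtain ⟨L, hL, hxL⟩ := List.mem_flatten.1 hx
      obtain ⟨i, hi, rfl⟩ := List.mem_map.1 hL
      have h1 := ih i x hxL
      have h2 : min n m ≤ i := by
        by_cases hn : n < m
        · simp only [stepRed, hn, if_pos, List.mem_singleton] at hi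
          omega
        · simp only [stepRed, hn, if_false, List.mem_map] at hi
          obtain ⟨y, _, rfl⟩ := hi
          omega
      omega

lemma seqE_idx_stab {k n : ℕ} : ∀ {m m' : ℕ}, n < m → m ≤ m' →
    (seqE hF Xs a k m').idx n = (seqE hF Xs a k m).idx n := by
  intro m m' hn h
  induction m' with
  | zero =>
    have hm0 : m = 0 := by omega
    rw [hm0]
  | succ m' ih =>
    rcases Nat.lt_or_ge m' m with hlt | hge
    · have : m = m' + 1 := by omega
      rw [this]
    · rw [← ih hge]
      by_cases hmk : m' + 1 ≤ k
      · rw [seqE_le hF Xs a hmk, seqE_le hF Xs a (by omega)]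
      · rw [seqE, if_neg hmk]
        show (((stepRed m' (rc hF Xs a m')).idx n).map (seqE hF Xs a k m').idx).flatten = _
        have hn' : n < m' := by omega
        simp only [stepRed, hn', if_pos, List.map_cons, List.map_nil,
          List.flatten_cons, List.flatten_nil, List.append_nil]

noncomputable def bseq : ℕ → ℕ := fun n => seqA hF Xs a (n + 1) n

lemma bseq_eq {n m : ℕ} (h : n < m) : bseq hF Xs a n = seqA hF Xs a m n :=
  (seqA_stab hF Xs a (Nat.lt_succ_self n) h).symm

lemma bseq_red : IsReduction F (bseq hF Xs a) a := by
  refine ⟨fun n => (seqE hF Xs a 0 (n + 1)).ops n, fun n => (seqE hF Xs a 0 (n + 1)).idx n,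
    fun n => (seqE hF Xs a 0 (n + 1)).horder n, fun n => (seqE hF Xs a 0 (n + 1)).hlen n,
    fun n => (seqE hF Xs a 0 (n + 1)).hchain n, ?_, ?_⟩
  · intro n m hnm x hx y hy
    have hx' : x ∈ (seqE hF Xs a 0 (m + 1)).idx n := by
      rw [seqE_idx_stab hF Xs a (Nat.lt_succ_self n) (by omega : n + 1 ≤ m + 1)]
      exact hx
    exact (seqE hF Xs a 0 (m + 1)).hcross n m hnm x hx' y hy
  · intro n
    have h := seqE_apply hF Xs a (k := 0) (m := n + 1) (Nat.zero_le _)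
    have : seqA hF Xs a 0 = a := rfl
    rw [this] at h
    calc bseq hF Xs a n = seqA hF Xs a (n + 1) n := rfl
    _ = (seqE hF Xs a 0 (n + 1)).apply a n := by rw [h]
    _ = _ := rfl

lemma tail_sub (k : ℕ) :
    FRset F (fun i => bseq hF Xs a (i + k)) ⊆ FRset F (ck hF Xs a k) := by
  rintro z ⟨t, ht, l, hc, hl, hv⟩
  set l₀ : List ℕ := l.map (· + k) with hl₀
  have hc₀ : l₀.Chain' (· < ·) := List.isChain_map_of_isChain _ (fun a b h => by omega) hc
  have hlen₀ : l₀.length = t.1 := by simp [hl₀, hl]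
  set M : ℕ := l₀.foldr max 0 + k + 1 with hM
  have hM1 : k + 1 ≤ M := by omega
  have hmem : ∀ i ∈ l₀, i < M := by
    intro i hi
    have := le_foldr_max l₀ i hi
    omega
  have hb : ∀ i ∈ l₀, bseq hF Xs a i =
      (seqE hF Xs a (k + 1) M).apply (seqA hF Xs a (k + 1)) i := by
    intro i hi
    rw [seqE_apply hF Xs a hM1, bseq_eq hF Xs a (hmem i hi)]
  obtain ⟨t', ht', l', hc', hl', hv', hmem'⟩ :=
    key (seqE hF Xs a (k + 1) M) (seqA hF Xs a (k + 1)) t ht l₀ hc₀ hlen₀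
  have hentry : ∀ x ∈ l', k ≤ x := by
    intro x hx
    obtain ⟨i, hi, hxi⟩ := hmem' x hx
    have h1 := seqE_min hF Xs a i x hxi
    obtain ⟨j, _, rfl⟩ := List.mem_map.1 hi
    omega
  refine ⟨t', ht', l'.map (fun x => x - k), chain'_sub l' hc' hentry, by simp [hl'], ?_⟩
  rw [List.map_map]
  have heq : (l'.map ((ck hF Xs a k) ∘ fun x => x - k)) = l'.map (seqA hF Xs a (k + 1)) := by
    refine List.map_congr_left fun x hx => ?_
    simp only [Function.comp]
    rw [← seqA_ge hF Xs a k (hentry x hx)]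
  rw [heq, hv']
  have : l₀.map ((seqE hF Xs a (k + 1) M).apply (seqA hF Xs a (k + 1))) = l₀.map (bseq hF Xs a) := by
    refine List.map_congr_left fun i hi => (hb i hi).symm
    
  rw [this, hl₀, List.map_map]
  have : (bseq hF Xs a) ∘ (· + k) = fun i => bseq hF Xs a (i + k) := rfl
  rw [this, hv]

end Construction

end Aux

theorem stmt16 (F : Set NatOp) (hF : IsRamseyAlg F)
    (𝒜 : Set (Set ℕ)) (h𝒜 : IsFieldOfSets 𝒜) (hcount : 𝒜.Countable)
    (hsing : ∀ x : ℕ, {x} ∈ 𝒜) (a : ℕ → ℕ) :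
    ∃ b : ℕ → ℕ, IsReduction F b a ∧
      IsUltraOn 𝒜 {X ∈ 𝒜 | ∃ n : ℕ, FRset F (fun i => b (i + n)) ⊆ X} := by
  obtain ⟨Xs, hXs⟩ := hcount.exists_eq_range h𝒜.1
  obtain ⟨hne, hunion, hinter, hcompl⟩ := h𝒜
  set b := bseq hF Xs a with hb
  refine ⟨b, bseq_red hF Xs a, fun X hX => hX.1, ?_, ?_, ?_, ?_⟩
  · rintro X ⟨hXA, n, hn⟩ Y ⟨hYA, m, hm⟩
    refine ⟨hinter X hXA Y hYA, max n m, Set.subset_inter ?_ ?_⟩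
    · exact (frtail_mono b (le_max_left n m)).trans hn
    · exact (frtail_mono b (le_max_right n m)).trans hm
  · obtain ⟨X₀, hX₀⟩ := hne
    have huniv : (Set.univ : Set ℕ) ∈ 𝒜 := by
      have := hunion X₀ hX₀ X₀ᶜ (hcompl X₀ hX₀)
      rwa [Set.union_compl_self] at this
    exact ⟨huniv, 0, Set.subset_univ _⟩
  · rintro ⟨-, n, hsub⟩
    exact hsub (fr_mem_zero _) 
  · intro X hXA
    have : X ∈ Set.range Xs := by rw [← hXs]; exact hXA
    obtain ⟨k, rfl⟩ := this
    rcases pick_spec hF (fun i => seqA hF Xs a k (i + k)) (Xs k) with h | h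
    · exact Or.inl ⟨hXA, k, (tail_sub hF Xs a k).trans h⟩
    · refine Or.inr ⟨hcompl _ hXA, k, (tail_sub hF Xs a k).trans ?_⟩
      exact fun z hz => (Set.disjoint_left.1 h hz)
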